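/- Quadrupling of the uniform-input statistical strength in the Tsirelson-box construction: with P₀ and P_f as in the explicit (2,4)-scenario construction, S_u(P_f) ≥ 4·S_u(P₀). -/

import Mathlib

open scoped ENNReal
open Finset

/-- A probability distribution on a finite type. -/
def IsDist {Z : Type*} [Fintype Z] (p : Z → ℝ) : Prop :=
  (∀ z, 0 ≤ p z) ∧ ∑ z, p z = 1

/-- Relative entropy (Kullback-Leibler divergence) of finitely supported
distributions, valued in `[0,∞]`, with the conventions `0·log(0/t) = 0` and
`S(p‖q) = ∞` whenever `q` vanishes at a point where `p` does not. -/
noncomputable def relEnt {Z : Type*} [Fintype Z] (p q : Z → ℝ) : ℝ≥0∞ :=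
  if ∃ z, p z ≠ 0 ∧ q z = 0 then ⊤
  else ENNReal.ofReal (∑ z, p z * Real.log (p z / q z))

/-- A behavior in the (r,s) Bell scenario: `P a b x y = P(a,b|x,y)`. -/
def IsBehavior {r s : ℕ} (P : Fin r → Fin r → Fin s → Fin s → ℝ) : Prop :=
  (∀ a b x y, 0 ≤ P a b x y) ∧ ∀ x y, ∑ a, ∑ b, P a b x y = 1

/-- The no-signaling conditions. -/
def NoSignaling {r s : ℕ} (P : Fin r → Fin r → Fin s → Fin s → ℝ) : Prop :=
  (∀ b x x' y, ∑ a, P a b x y = ∑ a, P a b x' y) ∧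
  (∀ a x y y', ∑ b, P a b x y = ∑ b, P a b x y')

/-- Local (local-hidden-variable) behavior. -/
def IsLocal {r s : ℕ} (P : Fin r → Fin r → Fin s → Fin s → ℝ) : Prop :=
  ∃ (n : ℕ) (q : Fin n → ℝ) (PA : Fin r → Fin s → Fin n → ℝ)
    (PB : Fin r → Fin s → Fin n → ℝ),
    IsDist q ∧
    (∀ x l, (∀ a, 0 ≤ PA a x l) ∧ ∑ a, PA a x l = 1) ∧
    (∀ y l, (∀ b, 0 ≤ PB b y l) ∧ ∑ b, PB b y l = 1) ∧
    (∀ a b x y, P a b x y = ∑ l, q l * PA a x l * PB b y l)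

/-- Output distribution `P(·,·|x,y)` of a behavior for fixed inputs. -/
def outDist {r s : ℕ} (P : Fin r → Fin r → Fin s → Fin s → ℝ) (x y : Fin s) :
    Fin r × Fin r → ℝ := fun ab => P ab.1 ab.2 x y

/-- The behavior relative entropy `S_b(P‖P')`: the maximum over input pairs
`(x,y)` of the relative entropy of the output distributions. -/
noncomputable def Sb {r s : ℕ} (P P' : Fin r → Fin r → Fin s → Fin s → ℝ) : ℝ≥0∞ :=
  Finset.univ.sup fun xy : Fin s × Fin s =>
    relEnt (outDist P xy.1 xy.2) (outDist P' xy.1 xy.2)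

/-- A global wiring from the (r,s) scenario to the (rf,sf) scenario. -/
structure GlobalWiring (r s rf sf : ℕ) where
  I : Fin s → Fin s → Fin sf → Fin sf → ℝ          -- I x y χ ψ  =  I(x,y|χ,ψ)
  O : Fin rf → Fin rf → Fin r → Fin r → Fin s → Fin s → Fin sf → Fin sf → ℝ
    -- O α β a b x y χ ψ  =  O(α,β|a,b,x,y,χ,ψ)
  I_nonneg : ∀ x y χ ψ, 0 ≤ I x y χ ψ
  I_sum : ∀ χ ψ, ∑ x, ∑ y, I x y χ ψ = 1
  O_nonneg : ∀ α β a b x y χ ψ, 0 ≤ O α β a b x y χ ψ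
  O_sum : ∀ a b x y χ ψ, ∑ α, ∑ β, O α β a b x y χ ψ = 1

/-- Action of a global wiring on a behavior. -/
noncomputable def GlobalWiring.apply {r s rf sf : ℕ} (W : GlobalWiring r s rf sf)
    (P : Fin r → Fin r → Fin s → Fin s → ℝ) :
    Fin rf → Fin rf → Fin sf → Fin sf → ℝ :=
  fun α β χ ψ => ∑ a, ∑ b, ∑ x, ∑ y,
    W.O α β a b x y χ ψ * P a b x y * W.I x y χ ψ

/-- LOSR wiring: a global wiring whose input and output boxes are local. -/
def GlobalWiring.IsLOSR {r s rf sf : ℕ} (W : GlobalWiring r s rf sf) : Prop :=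
  ∃ (n m : ℕ) (q : Fin n → ℝ) (q' : Fin m → ℝ)
    (IA : Fin s → Fin sf → Fin n → ℝ) (IB : Fin s → Fin sf → Fin n → ℝ)
    (OA : Fin rf → Fin r → Fin s → Fin sf → Fin m → ℝ)
    (OB : Fin rf → Fin r → Fin s → Fin sf → Fin m → ℝ),
    IsDist q ∧ IsDist q' ∧
    (∀ χ l, (∀ x, 0 ≤ IA x χ l) ∧ ∑ x, IA x χ l = 1) ∧
    (∀ ψ l, (∀ y, 0 ≤ IB y ψ l) ∧ ∑ y, IB y ψ l = 1) ∧
    (∀ a x χ u, (∀ α, 0 ≤ OA α a x χ u) ∧ ∑ α, OA α a x χ u = 1) ∧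
    (∀ b y ψ u, (∀ β, 0 ≤ OB β b y ψ u) ∧ ∑ β, OB β b y ψ u = 1) ∧
    (∀ x y χ ψ, W.I x y χ ψ = ∑ l, q l * IA x χ l * IB y ψ l) ∧
    (∀ α β a b x y χ ψ,
      W.O α β a b x y χ ψ = ∑ u, q' u * OA α a x χ u * OB β b y ψ u)

/-- UCLOSR wiring: a global wiring whose input and output boxes are products. -/
def GlobalWiring.IsUCLOSR {r s rf sf : ℕ} (W : GlobalWiring r s rf sf) : Prop :=
  ∃ (IA : Fin s → Fin sf → ℝ) (IB : Fin s → Fin sf → ℝ)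
    (OA : Fin rf → Fin r → Fin s → Fin sf → ℝ)
    (OB : Fin rf → Fin r → Fin s → Fin sf → ℝ),
    (∀ χ, (∀ x, 0 ≤ IA x χ) ∧ ∑ x, IA x χ = 1) ∧
    (∀ ψ, (∀ y, 0 ≤ IB y ψ) ∧ ∑ y, IB y ψ = 1) ∧
    (∀ a x χ, (∀ α, 0 ≤ OA α a x χ) ∧ ∑ α, OA α a x χ = 1) ∧
    (∀ b y ψ, (∀ β, 0 ≤ OB β b y ψ) ∧ ∑ β, OB β b y ψ = 1) ∧
    (∀ x y χ ψ, W.I x y χ ψ = IA x χ * IB y ψ) ∧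
    (∀ α β a b x y χ ψ, W.O α β a b x y χ ψ = OA α a x χ * OB β b y ψ)

/-- The relative entropy of nonlocality `S_nl`. -/
noncomputable def Snl {r s : ℕ} (P : Fin r → Fin r → Fin s → Fin s → ℝ) : ℝ≥0∞ :=
  ⨅ (Q : Fin r → Fin r → Fin s → Fin s → ℝ) (_ : IsBehavior Q ∧ IsLocal Q), Sb P Q

/-- The uniform-input statistical strength `S_u`. -/
noncomputable def Su {r s : ℕ} (P : Fin r → Fin r → Fin s → Fin s → ℝ) : ℝ≥0∞ :=
  ⨅ (Q : Fin r → Fin r → Fin s → Fin s → ℝ) (_ : IsBehavior Q ∧ IsLocal Q),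
    ((s : ℝ≥0∞) ^ 2)⁻¹ * ∑ x, ∑ y, relEnt (outDist P x y) (outDist Q x y)

/-- The uncorrelated-input statistical strength `S_uc`. -/
noncomputable def Suc {r s : ℕ} (P : Fin r → Fin r → Fin s → Fin s → ℝ) : ℝ≥0∞ :=
  ⨆ (DA : Fin s → ℝ) (DB : Fin s → ℝ) (_ : IsDist DA ∧ IsDist DB),
    ⨅ (Q : Fin r → Fin r → Fin s → Fin s → ℝ) (_ : IsBehavior Q ∧ IsLocal Q),
      ∑ x, ∑ y, ENNReal.ofReal (DA x * DB y) *
        relEnt (outDist P x y) (outDist Q x y)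

/-- The Tsirelson probability `p = 1/2 + 1/(2√2)`. -/
noncomputable def tsp : ℝ := 1 / 2 + 1 / (2 * Real.sqrt 2)

/-- The behavior `P₀` of the (2,4)-scenario construction: a Tsirelson box on
inputs `x·y ≤ 1` and white noise elsewhere. -/
noncomputable def TsBox : Fin 2 → Fin 2 → Fin 4 → Fin 4 → ℝ := fun a b x y =>
  if (x : ℕ) * (y : ℕ) = 0 then (if a = b then tsp / 2 else (1 - tsp) / 2)
  else if (x : ℕ) * (y : ℕ) = 1 then (if a = b then (1 - tsp) / 2 else tsp / 2)
  else 1 / 4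

/-- The wired behavior `P_f` of the (2,4)-scenario construction. -/
noncomputable def TsBoxF : Fin 2 → Fin 2 → Fin 4 → Fin 4 → ℝ := fun α β χ ψ =>
  if (χ : ℕ) * (ψ : ℕ) ≤ 1 then TsBox α β χ ψ
  else TsBox α β ⟨(χ : ℕ) % 2, by omega⟩ ⟨(ψ : ℕ) % 2, by omega⟩


/-! ### Auxiliary machinery -/

noncomputable def rt2 : ℝ := Real.sqrt 2

lemma rt2_sq : rt2 * rt2 = 2 := Real.mul_self_sqrt (by norm_num)

lemma rt2_pos : 0 < rt2 := Real.sqrt_pos.mpr (by norm_num)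

lemma rt2_gt1 : 1 < rt2 := by
  nlinarith [rt2_sq, rt2_pos]

lemma rt2_lt : rt2 < 3/2 := by
  nlinarith [rt2_sq, rt2_pos]

lemma tsp_eq : tsp = 1/2 + rt2/4 := by
  rw [tsp, rt2]
  have h := rt2_sq
  have h0 := rt2_pos
  rw [rt2] at h h0
  field_simp
  nlinarith [h]

/-- sign of an output bit -/
def sg : Fin 2 → ℝ := fun a => if a = 0 then 1 else -1

lemma sg_cases (a : Fin 2) : sg a = 1 ∨ sg a = -1 := by
  fin_cases a <;> simp [sg]

/-- the CHSH sign pattern on the (4,4) input grid (−1 iff both inputs odd) -/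
def e4 : Fin 4 → Fin 4 → ℝ := fun x y =>
  if (x : ℕ) % 2 = 1 ∧ (y : ℕ) % 2 = 1 then -1 else 1

lemma e4_cases (x y : Fin 4) : e4 x y = 1 ∨ e4 x y = -1 := by
  unfold e4; split <;> simp

/-- correlation table of `TsBox` (divided by 4) -/
noncomputable def TBc : Fin 4 → Fin 4 → ℝ := fun x y =>
  if (x : ℕ) * (y : ℕ) = 0 then rt2/8
  else if (x : ℕ) * (y : ℕ) = 1 then -(rt2/8) else 0

lemma corr_form (c : ℝ) (a b : Fin 2) :
    (if a = b then 1/4 + c else 1/4 - c) = 1/4 + sg a * sg b * c := by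
  fin_cases a <;> fin_cases b <;> simp [sg] <;> ring

lemma tsp_half : tsp/2 = 1/4 + rt2/8 := by rw [tsp_eq]; ring
lemma tsp_half' : (1 - tsp)/2 = 1/4 - rt2/8 := by rw [tsp_eq]; ring

lemma TsBox_eq (a b : Fin 2) (x y : Fin 4) :
    TsBox a b x y = 1/4 + sg a * sg b * TBc x y := by
  unfold TsBox TBc
  fin_cases a <;> fin_cases b <;> simp [sg, tsp_eq] <;> split_ifs <;> ring

lemma TsBoxF_eq (a b : Fin 2) (x y : Fin 4) :
    TsBoxF a b x y = 1/4 + (sg a * sg b * e4 x y) * (rt2/8) := by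
  fin_cases x <;> fin_cases y <;>
    simp only [TsBoxF] <;> norm_num <;> rw [TsBox_eq] <;> norm_num [TBc, e4] <;> ring

lemma sgsg_cases (a b : Fin 2) (x y : Fin 4) :
    sg a * sg b * e4 x y = 1 ∨ sg a * sg b * e4 x y = -1 := by
  rcases sg_cases a with h1 | h1 <;> rcases sg_cases b with h2 | h2 <;>
    rcases e4_cases x y with h3 | h3 <;> rw [h1, h2, h3] <;> norm_num

lemma TsBoxF_pos (a b : Fin 2) (x y : Fin 4) : 0 < TsBoxF a b x y := by
  rw [TsBoxF_eq]
  rcases sgsg_cases a b x y with h | h <;> rw [h] <;> nlinarith [rt2_lt, rt2_pos]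

lemma TsBoxF_sum (x y : Fin 4) : ∑ a : Fin 2, ∑ b : Fin 2, TsBoxF a b x y = 1 := by
  simp only [Fin.sum_univ_two]
  simp [TsBoxF_eq, sg]; ring

/-- the reference local behavior for the lower bound -/
noncomputable def Qst : Fin 2 → Fin 2 → Fin 4 → Fin 4 → ℝ := fun a b x y =>
  1/4 + (sg a * sg b * e4 x y) / 8

/-- the likelihood-ratio table `TsBoxF / Qst` -/
noncomputable def Rf : Fin 2 → Fin 2 → Fin 4 → Fin 4 → ℝ := fun a b x y =>
  (4 - rt2)/3 + (2*rt2 - 2)/3 * (sg a * sg b * e4 x y)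

lemma Qst_pos (a b : Fin 2) (x y : Fin 4) : 0 < Qst a b x y := by
  unfold Qst
  rcases sgsg_cases a b x y with h | h <;> rw [h] <;> norm_num

lemma T_eq_R_Qst (a b : Fin 2) (x y : Fin 4) :
    TsBoxF a b x y = Rf a b x y * Qst a b x y := by
  rw [TsBoxF_eq]; unfold Rf Qst
  rcases sgsg_cases a b x y with h | h <;> rw [h] <;> ring

/-- per-trial relative entropy of the Tsirelson box w.r.t. the optimal local box -/
noncomputable def dd : ℝ :=
  tsp * Real.log (tsp/2 / (3/8)) + (1 - tsp) * Real.log ((1-tsp)/2 / (1/8))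

lemma sum_T_logT_Qst (x y : Fin 4) :
    ∑ a : Fin 2, ∑ b : Fin 2,
      TsBoxF a b x y * Real.log (TsBoxF a b x y / Qst a b x y) = dd := by
  have h1 : (1:ℝ)/4 + rt2/8 = tsp/2 := tsp_half.symm
  have h2 : (1:ℝ)/4 - rt2/8 = (1-tsp)/2 := tsp_half'.symm
  rcases e4_cases x y with h | h <;>
  · simp only [Fin.sum_univ_two, TsBoxF_eq, Qst, dd, sg, h]
    norm_num
    rw [h1, show (1:ℝ)/4 + -(rt2/8) = (1-tsp)/2 from by rw [tsp_eq]; ring]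
    ring

lemma fv0 : ((0:Fin 4):ℕ) = 0 := rfl
lemma fv1 : ((1:Fin 4):ℕ) = 1 := rfl
lemma fv2 : ((2:Fin 4):ℕ) = 2 := rfl
lemma fv3 : ((3:Fin 4):ℕ) = 3 := rfl

/-- pointwise Gibbs-type bound -/
lemma pointwise_bound (T R Qs Q : ℝ) (hT : 0 < T) (hQ : 0 < Q) (hQs : 0 < Qs)
    (hTR : T = R * Qs) :
    T * Real.log (T / Qs) + (T - R * Q) ≤ T * Real.log (T / Q) := by
  have h1 : Real.log (T/Q) = Real.log (T/Qs) + Real.log (Qs/Q) := by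
    rw [Real.log_div hT.ne' hQ.ne', Real.log_div hT.ne' hQs.ne',
        Real.log_div hQs.ne' hQ.ne']
    ring
  have h2 : Real.log (Q/Qs) ≤ Q/Qs - 1 := Real.log_le_sub_one_of_pos (by positivity)
  have h3 : Real.log (Qs/Q) = -Real.log (Q/Qs) := by
    rw [← Real.log_inv]; congr 1; field_simp
  have h4 : T * (Q/Qs) = R * Q := by
    rw [hTR]; field_simp
  have h5 : T * Real.log (Q/Qs) ≤ T * (Q/Qs - 1) :=
    mul_le_mul_of_nonneg_left h2 hT.le
  rw [h1, h3]
  nlinarith [h5]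

lemma chsh8 (a b c d : ℝ) (ha : -2 ≤ a ∧ a ≤ 2) (hb : -2 ≤ b ∧ b ≤ 2)
    (hc : -2 ≤ c ∧ c ≤ 2) (hd : -2 ≤ d ∧ d ≤ 2) :
    a*(c+d) + b*(c-d) ≤ 8 := by
  rcases le_total 0 (c+d) with h1 | h1 <;> rcases le_total 0 (c-d) with h2 | h2 <;>
    nlinarith [ha.1, ha.2, hb.1, hb.2, hc.1, hc.2, hd.1, hd.2]

/-- CHSH-type bound for the linearized functional -/
lemma key_bound (A B : Fin 4 → ℝ) (hA : ∀ x, -1 ≤ A x ∧ A x ≤ 1)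
    (hB : ∀ y, -1 ≤ B y ∧ B y ≤ 1) :
    ∑ x : Fin 4, ∑ y : Fin 4,
      ((4 - rt2)/3 + (2*rt2 - 2)/3 * (e4 x y * A x * B y)) ≤ 16 := by
  have hS : (A 0 + A 2) * ((B 0 + B 2) + (B 1 + B 3))
      + (A 1 + A 3) * ((B 0 + B 2) - (B 1 + B 3)) ≤ 8 := by
    apply chsh8 <;> constructor <;>
      nlinarith [(hA 0).1, (hA 0).2, (hA 1).1, (hA 1).2, (hA 2).1, (hA 2).2,
                 (hA 3).1, (hA 3).2, (hB 0).1, (hB 0).2, (hB 1).1, (hB 1).2,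
                 (hB 2).1, (hB 2).2, (hB 3).1, (hB 3).2]
  have he : ∑ x : Fin 4, ∑ y : Fin 4,
      ((4 - rt2)/3 + (2*rt2 - 2)/3 * (e4 x y * A x * B y))
      = 16 * ((4 - rt2)/3) + (2*rt2 - 2)/3 *
        ((A 0 + A 2) * ((B 0 + B 2) + (B 1 + B 3))
          + (A 1 + A 3) * ((B 0 + B 2) - (B 1 + B 3))) := by
    simp only [Fin.sum_univ_four]
    norm_num [e4, fv0, fv1, fv2, fv3]
    ring
  rw [he]
  nlinarith [rt2_gt1, hS, rt2_lt]

lemma inner_id (x y : Fin 4) (pa0 pa1 pb0 pb1 : ℝ) (hx : pa0 + pa1 = 1)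
    (hy : pb0 + pb1 = 1) :
    Rf 0 0 x y * (pa0 * pb0) + Rf 0 1 x y * (pa0 * pb1)
      + (Rf 1 0 x y * (pa1 * pb0) + Rf 1 1 x y * (pa1 * pb1))
    = (4 - rt2)/3 + (2*rt2 - 2)/3 * (e4 x y * (pa0 - pa1) * (pb0 - pb1)) := by
  simp only [Rf, sg]
  norm_num
  linear_combination (((4 - rt2)/3) * (pb0 + pb1)) * hx + ((4 - rt2)/3) * hy

lemma sum_swap5 {n : ℕ} (f : Fin 4 → Fin 4 → Fin 2 → Fin 2 → Fin n → ℝ) :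
    ∑ x : Fin 4, ∑ y : Fin 4, ∑ a : Fin 2, ∑ b : Fin 2, ∑ l : Fin n, f x y a b l
      = ∑ l : Fin n, ∑ x : Fin 4, ∑ y : Fin 4, ∑ a : Fin 2, ∑ b : Fin 2, f x y a b l :=
  calc ∑ x : Fin 4, ∑ y : Fin 4, ∑ a : Fin 2, ∑ b : Fin 2, ∑ l : Fin n, f x y a b l
      = ∑ x : Fin 4, ∑ y : Fin 4, ∑ a : Fin 2, ∑ l : Fin n, ∑ b : Fin 2, f x y a b l :=
        Finset.sum_congr rfl fun x _ => Finset.sum_congr rfl fun y _ =>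
          Finset.sum_congr rfl fun a _ => Finset.sum_comm
    _ = ∑ x : Fin 4, ∑ y : Fin 4, ∑ l : Fin n, ∑ a : Fin 2, ∑ b : Fin 2, f x y a b l :=
        Finset.sum_congr rfl fun x _ => Finset.sum_congr rfl fun y _ =>
          Finset.sum_comm
    _ = ∑ x : Fin 4, ∑ l : Fin n, ∑ y : Fin 4, ∑ a : Fin 2, ∑ b : Fin 2, f x y a b l :=
        Finset.sum_congr rfl fun x _ => Finset.sum_comm
    _ = ∑ l : Fin n, ∑ x : Fin 4, ∑ y : Fin 4, ∑ a : Fin 2, ∑ b : Fin 2, f x y a b l :=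
        Finset.sum_comm

lemma locsum (Q : Fin 2 → Fin 2 → Fin 4 → Fin 4 → ℝ) (hQl : IsLocal Q) :
    ∑ x : Fin 4, ∑ y : Fin 4, ∑ a : Fin 2, ∑ b : Fin 2, Rf a b x y * Q a b x y ≤ 16 := by
  obtain ⟨n, q, PA, PB, hq, hPA, hPB, hQ⟩ := hQl
  have step1 : ∑ x : Fin 4, ∑ y : Fin 4, ∑ a : Fin 2, ∑ b : Fin 2, Rf a b x y * Q a b x y
      = ∑ l : Fin n, ∑ x : Fin 4, ∑ y : Fin 4, ∑ a : Fin 2, ∑ b : Fin 2,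
          q l * (Rf a b x y * (PA a x l * PB b y l)) := by
    rw [← sum_swap5]
    refine Finset.sum_congr rfl fun x _ => Finset.sum_congr rfl fun y _ =>
      Finset.sum_congr rfl fun a _ => Finset.sum_congr rfl fun b _ => ?_
    rw [hQ, Finset.mul_sum]
    exact Finset.sum_congr rfl fun l _ => by ring
  have perl : ∀ l, ∑ x : Fin 4, ∑ y : Fin 4, ∑ a : Fin 2, ∑ b : Fin 2,
      Rf a b x y * (PA a x l * PB b y l) ≤ 16 := by
    intro l
    have inner : ∀ (x y : Fin 4), ∑ a : Fin 2, ∑ b : Fin 2,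
        Rf a b x y * (PA a x l * PB b y l)
        = (4 - rt2)/3 + (2*rt2 - 2)/3 *
            (e4 x y * (PA 0 x l - PA 1 x l) * (PB 0 y l - PB 1 y l)) := by
      intro x y
      have hx : PA 0 x l + PA 1 x l = 1 := by
        have := (hPA x l).2; rwa [Fin.sum_univ_two] at this
      have hy : PB 0 y l + PB 1 y l = 1 := by
        have := (hPB y l).2; rwa [Fin.sum_univ_two] at this
      simp only [Fin.sum_univ_two]
      exact inner_id x y _ _ _ _ hx hy
    calc ∑ x : Fin 4, ∑ y : Fin 4, ∑ a : Fin 2, ∑ b : Fin 2,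
          Rf a b x y * (PA a x l * PB b y l)
        = ∑ x : Fin 4, ∑ y : Fin 4, ((4 - rt2)/3 + (2*rt2 - 2)/3 *
            (e4 x y * (PA 0 x l - PA 1 x l) * (PB 0 y l - PB 1 y l))) :=
          Finset.sum_congr rfl fun x _ => Finset.sum_congr rfl fun y _ => inner x y
      _ ≤ 16 := by
          apply key_bound
          · intro x
            have hx : PA 0 x l + PA 1 x l = 1 := by
              have := (hPA x l).2; rwa [Fin.sum_univ_two] at this
            have h0 := (hPA x l).1 0; have h1 := (hPA x l).1 1
            constructor <;> linarith
          · intro y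
            have hy : PB 0 y l + PB 1 y l = 1 := by
              have := (hPB y l).2; rwa [Fin.sum_univ_two] at this
            have h0 := (hPB y l).1 0; have h1 := (hPB y l).1 1
            constructor <;> linarith
  rw [step1]
  calc ∑ l : Fin n, ∑ x : Fin 4, ∑ y : Fin 4, ∑ a : Fin 2, ∑ b : Fin 2,
        q l * (Rf a b x y * (PA a x l * PB b y l))
      = ∑ l : Fin n, q l * (∑ x : Fin 4, ∑ y : Fin 4, ∑ a : Fin 2, ∑ b : Fin 2,
          Rf a b x y * (PA a x l * PB b y l)) :=
        Finset.sum_congr rfl fun l _ => by simp only [Finset.mul_sum]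
    _ ≤ ∑ l : Fin n, q l * 16 :=
        Finset.sum_le_sum fun l _ => mul_le_mul_of_nonneg_left (perl l) (hq.1 l)
    _ = 16 := by rw [← Finset.sum_mul, hq.2, one_mul]

lemma real_core (Q : Fin 2 → Fin 2 → Fin 4 → Fin 4 → ℝ) (hQl : IsLocal Q)
    (hQpos : ∀ a b x y, 0 < Q a b x y) :
    16 * dd ≤ ∑ x : Fin 4, ∑ y : Fin 4, ∑ a : Fin 2, ∑ b : Fin 2,
      TsBoxF a b x y * Real.log (TsBoxF a b x y / Q a b x y) := by
  have hsum : ∑ x : Fin 4, ∑ y : Fin 4, ∑ a : Fin 2, ∑ b : Fin 2,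
      (TsBoxF a b x y * Real.log (TsBoxF a b x y / Qst a b x y)
        + (TsBoxF a b x y - Rf a b x y * Q a b x y))
      ≤ ∑ x : Fin 4, ∑ y : Fin 4, ∑ a : Fin 2, ∑ b : Fin 2,
        TsBoxF a b x y * Real.log (TsBoxF a b x y / Q a b x y) :=
    Finset.sum_le_sum fun x _ => Finset.sum_le_sum fun y _ =>
      Finset.sum_le_sum fun a _ => Finset.sum_le_sum fun b _ =>
        pointwise_bound _ _ _ _ (TsBoxF_pos a b x y) (hQpos a b x y)
          (Qst_pos a b x y) (T_eq_R_Qst a b x y)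
  have split : ∑ x : Fin 4, ∑ y : Fin 4, ∑ a : Fin 2, ∑ b : Fin 2,
      (TsBoxF a b x y * Real.log (TsBoxF a b x y / Qst a b x y)
        + (TsBoxF a b x y - Rf a b x y * Q a b x y))
      = 16 * dd + (16 - ∑ x : Fin 4, ∑ y : Fin 4, ∑ a : Fin 2, ∑ b : Fin 2,
          Rf a b x y * Q a b x y) := by
    simp only [Finset.sum_add_distrib, Finset.sum_sub_distrib, sum_T_logT_Qst, TsBoxF_sum]
    simp [Finset.sum_const]
    ring
  linarith [locsum Q hQl, hsum, split]

lemma ofReal_sum_le {ι : Type*} (s : Finset ι) (f : ι → ℝ) :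
    ENNReal.ofReal (∑ i ∈ s, f i) ≤ ∑ i ∈ s, ENNReal.ofReal (f i) := by
  induction s using Finset.cons_induction with
  | empty => simp
  | cons i s hi ih =>
      rw [Finset.sum_cons, Finset.sum_cons]
      exact le_trans ENNReal.ofReal_add_le (add_le_add le_rfl ih)

lemma step2 (Q : Fin 2 → Fin 2 → Fin 4 → Fin 4 → ℝ)
    (hQ : IsBehavior Q ∧ IsLocal Q) :
    ENNReal.ofReal (16 * dd)
      ≤ ∑ x : Fin 4, ∑ y : Fin 4, relEnt (outDist TsBoxF x y) (outDist Q x y) := by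
  by_cases hz : ∃ (x y : Fin 4) (z : Fin 2 × Fin 2),
      outDist TsBoxF x y z ≠ 0 ∧ outDist Q x y z = 0
  · obtain ⟨x, y, z, h1, h2⟩ := hz
    have htop : relEnt (outDist TsBoxF x y) (outDist Q x y) = ⊤ := by
      rw [relEnt, if_pos ⟨z, h1, h2⟩]
    have hsum : (∑ x : Fin 4, ∑ y : Fin 4,
        relEnt (outDist TsBoxF x y) (outDist Q x y)) = ⊤ := by
      rw [ENNReal.sum_eq_top]
      refine ⟨x, Finset.mem_univ _, ?_⟩
      rw [ENNReal.sum_eq_top]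
      exact ⟨y, Finset.mem_univ _, htop⟩
    rw [hsum]; exact le_top
  · push_neg at hz
    have hQpos : ∀ (a b : Fin 2) (x y : Fin 4), 0 < Q a b x y := by
      intro a b x y
      rcases (hQ.1.1 a b x y).lt_or_eq with h | h
      · exact h
      · exact absurd h.symm (hz x y (a, b) (TsBoxF_pos a b x y).ne')
    have hre : ∀ x y : Fin 4, relEnt (outDist TsBoxF x y) (outDist Q x y)
        = ENNReal.ofReal (∑ a : Fin 2, ∑ b : Fin 2,
            TsBoxF a b x y * Real.log (TsBoxF a b x y / Q a b x y)) := by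
      intro x y
      rw [relEnt, if_neg]
      · congr 1
        rw [Fintype.sum_prod_type]
        rfl
      · rintro ⟨z, h1, h2⟩; exact (hQpos z.1 z.2 x y).ne' h2
    calc ENNReal.ofReal (16 * dd)
        ≤ ENNReal.ofReal (∑ x : Fin 4, ∑ y : Fin 4, ∑ a : Fin 2, ∑ b : Fin 2,
            TsBoxF a b x y * Real.log (TsBoxF a b x y / Q a b x y)) :=
          ENNReal.ofReal_le_ofReal (real_core Q hQ.2 hQpos)
      _ ≤ ∑ x : Fin 4, ENNReal.ofReal (∑ y : Fin 4, ∑ a : Fin 2, ∑ b : Fin 2,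
            TsBoxF a b x y * Real.log (TsBoxF a b x y / Q a b x y)) :=
          ofReal_sum_le _ _
      _ ≤ ∑ x : Fin 4, ∑ y : Fin 4, ENNReal.ofReal (∑ a : Fin 2, ∑ b : Fin 2,
            TsBoxF a b x y * Real.log (TsBoxF a b x y / Q a b x y)) :=
          Finset.sum_le_sum fun x _ => ofReal_sum_le _ _
      _ = ∑ x : Fin 4, ∑ y : Fin 4, relEnt (outDist TsBoxF x y) (outDist Q x y) := by
          simp only [hre]

noncomputable def q18 : Fin 18 → ℝ := ![(1:ℝ)/4/2, (1:ℝ)/4/2, 1/4/2, 1/4/2, 1/8/2, 1/8/2, (rt2-1)/4/2, (rt2-1)/4/2, (2-rt2)/8/2, (2-rt2)/8/2, (rt2-1)/8/2, (rt2-1)/8/2, (2-rt2)/8/2, (2-rt2)/8/2, (rt2-1)/8/2, (rt2-1)/8/2, (3-2*rt2)/8/2, (3-2*rt2)/8/2]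
noncomputable def U18 : Fin 18 → Fin 4 → ℝ := ![![1,1,1,1], ![-1,-1,-1,-1], ![1,-1,-1,-1], ![-1,1,1,1], ![1,-1,1,1], ![-1,1,-1,-1], ![1,1,1,1], ![-1,-1,-1,-1], ![1,1,1,1], ![-1,-1,-1,-1], ![1,-1,-1,-1], ![-1,1,1,1], ![1,1,-1,-1], ![-1,-1,1,1], ![1,-1,1,1], ![-1,1,-1,-1], ![1,-1,-1,-1], ![-1,1,1,1]]
noncomputable def V18 : Fin 18 → Fin 4 → ℝ := ![![1,1,1,1], ![-1,-1,-1,-1], ![-1,1,1,1], ![1,-1,-1,-1], ![1,1,1,1], ![-1,-1,-1,-1], ![1,-1,1,1], ![-1,1,-1,-1], ![1,-1,-1,-1], ![-1,1,1,1], ![1,1,1,1], ![-1,-1,-1,-1], ![1,-1,1,1], ![-1,1,-1,-1], ![1,1,-1,-1], ![-1,-1,1,1], ![1,1,-1,-1], ![-1,-1,1,1]]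

/-- correlation matrix of the optimal local model for `TsBox` -/
noncomputable def Xm : Fin 4 → Fin 4 → ℝ := fun x y =>
  if (y : ℕ) = 0 then (if (x : ℕ) ≤ 1 then 1/2 else rt2/2)
  else if (y : ℕ) = 1 then
    (if (x : ℕ) = 0 then 1/2 else if (x : ℕ) = 1 then -(1/2) else 0)
  else (if (x : ℕ) = 0 then rt2/2 else 0)

noncomputable def PAs : Fin 2 → Fin 4 → Fin 18 → ℝ := fun a x l => (1 + sg a * U18 l x)/2
noncomputable def PBs : Fin 2 → Fin 4 → Fin 18 → ℝ := fun b y l => (1 + sg b * V18 l y)/2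

/-- the optimal local behavior for `TsBox` -/
noncomputable def Qs : Fin 2 → Fin 2 → Fin 4 → Fin 4 → ℝ := fun a b x y =>
  ∑ l : Fin 18, q18 l * PAs a x l * PBs b y l

set_option maxHeartbeats 2000000 in
lemma hU18 (l : Fin 18) (x : Fin 4) : U18 l x = 1 ∨ U18 l x = -1 := by
  fin_cases l <;> fin_cases x <;> norm_num [U18]

set_option maxHeartbeats 2000000 in
lemma hV18 (l : Fin 18) (y : Fin 4) : V18 l y = 1 ∨ V18 l y = -1 := by
  fin_cases l <;> fin_cases y <;> norm_num [V18]

set_option maxHeartbeats 2000000 in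
lemma q18_nonneg (l : Fin 18) : 0 ≤ q18 l := by
  fin_cases l <;> norm_num [q18] <;> nlinarith [rt2_gt1, rt2_lt]

set_option maxHeartbeats 2000000 in
lemma q18_sum : ∑ l : Fin 18, q18 l = 1 := by
  simp [Fin.sum_univ_succ, q18]; ring

lemma PAs_dist (x : Fin 4) (l : Fin 18) :
    (∀ a, 0 ≤ PAs a x l) ∧ ∑ a : Fin 2, PAs a x l = 1 := by
  constructor
  · intro a
    rcases hU18 l x with h | h <;> rcases sg_cases a with h2 | h2 <;>
      simp [PAs, h, h2]
  · simp [Fin.sum_univ_two, PAs, sg]; ring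

lemma PBs_dist (y : Fin 4) (l : Fin 18) :
    (∀ b, 0 ≤ PBs b y l) ∧ ∑ b : Fin 2, PBs b y l = 1 := by
  constructor
  · intro b
    rcases hV18 l y with h | h <;> rcases sg_cases b with h2 | h2 <;>
      simp [PBs, h, h2]
  · simp [Fin.sum_univ_two, PBs, sg]; ring

set_option maxHeartbeats 2000000 in
lemma Qs_eq (a b : Fin 2) (x y : Fin 4) :
    Qs a b x y = 1/4 + sg a * sg b * (Xm x y / 4) := by
  fin_cases x <;> fin_cases y <;>
  · simp only [Qs, PAs, PBs, Fin.sum_univ_succ, Finset.sum_empty, Fin.sum_univ_zero,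
      q18, U18, V18, Matrix.cons_val_succ, Matrix.cons_val_zero]
    norm_num [q18, U18, V18, Xm]
    ring

lemma sgsg2 (a b : Fin 2) : sg a * sg b = 1 ∨ sg a * sg b = -1 := by
  rcases sg_cases a with h1 | h1 <;> rcases sg_cases b with h2 | h2 <;>
    rw [h1, h2] <;> norm_num

lemma Xm_cases (x y : Fin 4) :
    Xm x y = 1/2 ∨ Xm x y = -(1/2) ∨ Xm x y = rt2/2 ∨ Xm x y = 0 := by
  fin_cases x <;> fin_cases y <;> norm_num [Xm]

lemma Qs_pos (a b : Fin 2) (x y : Fin 4) : 0 < Qs a b x y := by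
  rw [Qs_eq]
  rcases sgsg2 a b with h | h <;>
    rcases Xm_cases x y with h2 | h2 | h2 | h2 <;> rw [h, h2] <;>
    nlinarith [rt2_pos, rt2_lt]

lemma Qs_behavior : IsBehavior Qs := by
  constructor
  · intro a b x y
    exact Finset.sum_nonneg fun l _ => mul_nonneg
      (mul_nonneg (q18_nonneg l) ((PAs_dist x l).1 a)) ((PBs_dist y l).1 b)
  · intro x y
    simp only [Fin.sum_univ_two, Qs_eq, sg]
    norm_num
    ring

lemma Qs_local : IsLocal Qs :=
  ⟨18, q18, PAs, PBs, ⟨q18_nonneg, q18_sum⟩, PAs_dist, PBs_dist, fun _ _ _ _ => rfl⟩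

lemma relEnt_self {Z : Type*} [Fintype Z] (p : Z → ℝ) : relEnt p p = 0 := by
  rw [relEnt, if_neg (by rintro ⟨z, h1, h2⟩; exact h1 h2)]
  rw [Finset.sum_eq_zero, ENNReal.ofReal_zero]
  intro z _
  by_cases h : p z = 0
  · rw [h]; ring
  · rw [div_self h, Real.log_one, mul_zero]

lemma Qs_offblock (x y : Fin 4) (h : ¬((x : ℕ) ≤ 1 ∧ (y : ℕ) ≤ 1)) (a b : Fin 2) :
    Qs a b x y = TsBox a b x y := by
  rw [Qs_eq, TsBox_eq]
  have hXT : Xm x y / 4 = TBc x y := by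
    fin_cases x <;> fin_cases y <;>
      first
        | (exfalso; apply h; constructor <;> decide)
        | (norm_num [Xm, TBc]; try ring)
  rw [← hXT]

lemma relEnt_offblock (x y : Fin 4) (h : ¬((x : ℕ) ≤ 1 ∧ (y : ℕ) ≤ 1)) :
    relEnt (outDist TsBox x y) (outDist Qs x y) = 0 := by
  have : outDist Qs x y = outDist TsBox x y :=
    funext fun z => Qs_offblock x y h z.1 z.2
  rw [this, relEnt_self]

lemma relEnt_block (x y : Fin 4) (hx : (x : ℕ) ≤ 1) (hy : (y : ℕ) ≤ 1) :
    relEnt (outDist TsBox x y) (outDist Qs x y) = ENNReal.ofReal dd := by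
  have hQB : ∀ a b, Qs a b x y = Qst a b x y := by
    have hXe : Xm x y / 4 = e4 x y / 8 := by
      fin_cases x <;> fin_cases y <;>
        first
          | (exfalso; revert hx hy; decide)
          | (norm_num [Xm, e4])
    intro a b
    rw [Qs_eq, Qst, hXe]
    ring
  have hTB : ∀ a b : Fin 2, TsBox a b x y = TsBoxF a b x y := by
    intro a b
    unfold TsBoxF
    rw [if_pos]
    calc (x : ℕ) * (y : ℕ) ≤ 1 * 1 := Nat.mul_le_mul hx hy
      _ = 1 := by norm_num
  rw [relEnt, if_neg]
  · rw [Fintype.sum_prod_type]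
    congr 1
    calc ∑ a : Fin 2, ∑ b : Fin 2, outDist TsBox x y (a, b) *
          Real.log (outDist TsBox x y (a, b) / outDist Qs x y (a, b))
        = ∑ a : Fin 2, ∑ b : Fin 2,
            TsBoxF a b x y * Real.log (TsBoxF a b x y / Qst a b x y) := by
          refine Finset.sum_congr rfl fun a _ => Finset.sum_congr rfl fun b _ => ?_
          show TsBox a b x y * Real.log (TsBox a b x y / Qs a b x y) = _
          rw [hTB, hQB]
      _ = dd := sum_T_logT_Qst x y
  · rintro ⟨z, h1, h2⟩; exact (Qs_pos z.1 z.2 x y).ne' h2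

lemma step1 : Su TsBox ≤ (16 : ℝ≥0∞)⁻¹ * (4 * ENNReal.ofReal dd) := by
  have hval : ∑ x : Fin 4, ∑ y : Fin 4, relEnt (outDist TsBox x y) (outDist Qs x y)
      = 4 * ENNReal.ofReal dd := by
    simp only [Fin.sum_univ_four]
    rw [relEnt_block 0 0 (by decide) (by decide), relEnt_block 0 1 (by decide) (by decide),
        relEnt_block 1 0 (by decide) (by decide), relEnt_block 1 1 (by decide) (by decide),
        relEnt_offblock 0 2 (by decide), relEnt_offblock 0 3 (by decide),
        relEnt_offblock 1 2 (by decide), relEnt_offblock 1 3 (by decide),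
        relEnt_offblock 2 0 (by decide), relEnt_offblock 2 1 (by decide),
        relEnt_offblock 2 2 (by decide), relEnt_offblock 2 3 (by decide),
        relEnt_offblock 3 0 (by decide), relEnt_offblock 3 1 (by decide),
        relEnt_offblock 3 2 (by decide), relEnt_offblock 3 3 (by decide)]
    simp only [add_zero, zero_add]
    ring
  unfold Su
  refine le_trans (iInf_le_of_le Qs (iInf_le _ ⟨Qs_behavior, Qs_local⟩)) ?_
  rw [hval]
  have hc : (((4 : ℕ) : ℝ≥0∞) ^ 2)⁻¹ = (16 : ℝ≥0∞)⁻¹ := by norm_num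
  rw [hc]

theorem Su_quadruples' : 4 * Su TsBox ≤ Su TsBoxF := by
  have h2 : (16 : ℝ≥0∞)⁻¹ * ENNReal.ofReal (16 * dd) ≤ Su TsBoxF := by
    unfold Su
    refine le_iInf fun Q => le_iInf fun hQ => ?_
    have hc : (((4 : ℕ) : ℝ≥0∞) ^ 2)⁻¹ = (16 : ℝ≥0∞)⁻¹ := by norm_num
    rw [hc]
    exact mul_le_mul_right (step2 Q hQ) _
  calc 4 * Su TsBox ≤ 4 * ((16 : ℝ≥0∞)⁻¹ * (4 * ENNReal.ofReal dd)) :=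
        mul_le_mul_right step1 4
    _ = (16 : ℝ≥0∞)⁻¹ * ENNReal.ofReal (16 * dd) := by
        rw [show ENNReal.ofReal (16 * dd) = 16 * ENNReal.ofReal dd from by
          rw [ENNReal.ofReal_mul (by norm_num : (0:ℝ) ≤ 16)]; norm_num]
        ring
    _ ≤ Su TsBoxF := h2

/-- quadrupling of the uniform-input statistical strength in the
Tsirelson-box construction. -/
theorem Su_quadruples : 4 * Su TsBox ≤ Su TsBoxF := by
  exact Su_quadruples'
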